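/- arXiv:2405.15957 — 9 statements merged into one kernel-verified Lean document; each statement's English description precedes it below -/
import Mathlib

section
/- Let I ⊆ ℝ be a nontrivial open interval and let x, θ : I → ℝ be twice differentiable functions such that for every s ∈ I and every real t > 0 one has t²·(x'(s)·θ''(s) − θ'(s)·x''(s) + 2·θ'(s)³) + 2·x'(s)·θ'(s)²·t + x'(s)²·θ'(s) = 0. Then θ is constant on I. -/
lemma quad_coeffs (A B C : ℝ) (h : ∀ t : ℝ, 0 < t → t ^ 2 * A + B * t + C = 0) :
    A = 0 ∧ B = 0 ∧ C = 0 := by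
  have h1 := h 1 one_pos
  have h2 := h 2 two_pos
  have h3 := h 3 (by norm_num)
  norm_num at h1 h2 h3
  refine ⟨by linarith, by linarith, by linarith⟩

/-- classification of 𝒜-invariant ∂ₓ-translators: the polynomial
identity in `t > 0` forces `θ` to be constant on the interval. -/
theorem stmt_1 (a b : ℝ) (hab : a < b) (x θ : ℝ → ℝ)
    (hx : ∀ s ∈ Set.Ioo a b, DifferentiableAt ℝ x s)
    (hx' : ∀ s ∈ Set.Ioo a b, DifferentiableAt ℝ (deriv x) s)
    (hθ : ∀ s ∈ Set.Ioo a b, DifferentiableAt ℝ θ s)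
    (hθ' : ∀ s ∈ Set.Ioo a b, DifferentiableAt ℝ (deriv θ) s)
    (heq : ∀ s ∈ Set.Ioo a b, ∀ t : ℝ, 0 < t →
      t ^ 2 * (deriv x s * deriv (deriv θ) s - deriv θ s * deriv (deriv x) s
          + 2 * (deriv θ s) ^ 3)
        + 2 * deriv x s * (deriv θ s) ^ 2 * t + (deriv x s) ^ 2 * deriv θ s = 0) :
    ∀ s ∈ Set.Ioo a b, ∀ s' ∈ Set.Ioo a b, θ s = θ s' := by
  -- coefficients vanish
  have hcoef : ∀ s ∈ Set.Ioo a b,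
      (deriv x s * deriv (deriv θ) s - deriv θ s * deriv (deriv x) s
          + 2 * (deriv θ s) ^ 3) = 0 ∧
      2 * deriv x s * (deriv θ s) ^ 2 = 0 ∧ (deriv x s) ^ 2 * deriv θ s = 0 := by
    intro s hs
    exact quad_coeffs _ _ _ (fun t ht => by
      have := heq s hs t ht; ring_nf at this ⊢; linarith)
  -- θ' vanishes on the interval
  have hzero : ∀ s ∈ Set.Ioo a b, deriv θ s = 0 := by
    intro s hs
    by_contra hne
    -- near s, deriv θ ≠ 0 and we are in Ioo
    have hopen : Set.Ioo a b ∈ nhds s := (isOpen_Ioo).mem_nhds hs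
    have hcont : ContinuousAt (deriv θ) s := (hθ' s hs).continuousAt
    have hev : ∀ᶠ y in nhds s, deriv θ y ≠ 0 := hcont.eventually_ne hne
    have hxz : ∀ᶠ y in nhds s, deriv x y = 0 := by
      filter_upwards [hopen, hev] with y hy hny
      have h3 := (hcoef y hy).2.2
      rcases mul_eq_zero.1 h3 with h | h
      · exact pow_eq_zero_iff (by norm_num) |>.1 h
      · exact absurd h hny
    have hxs : deriv x s = 0 := hxz.self_of_nhds
    have hxx : deriv (deriv x) s = 0 := by
      have : deriv x =ᶠ[nhds s] (fun _ => (0 : ℝ)) := hxz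
      rw [this.deriv_eq, deriv_const]
    have h1 := (hcoef s hs).1
    rw [hxs, hxx] at h1
    have : deriv θ s ^ 3 = 0 := by linarith
    exact hne (pow_eq_zero_iff (by norm_num) |>.1 this)
  -- conclude θ constant
  have key : ∀ u ∈ Set.Ioo a b, ∀ v ∈ Set.Ioo a b, u ≤ v → θ v = θ u := by
    intro u hu v hv huv
    have hsub : Set.Icc u v ⊆ Set.Ioo a b := fun y hy =>
      ⟨lt_of_lt_of_le hu.1 hy.1, lt_of_le_of_lt hy.2 hv.2⟩
    have := constant_of_has_deriv_right_zero
      (f := θ) (a := u) (b := v)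
      (fun y hy => ((hθ y (hsub hy)).continuousAt).continuousWithinAt)
      (fun y hy => by
        have hy' : y ∈ Set.Ioo a b := hsub ⟨hy.1, le_of_lt hy.2⟩
        have := (hθ y hy').hasDerivAt
        rw [hzero y hy'] at this
        exact this.hasDerivWithinAt)
    exact this v ⟨huv, le_refl v⟩
  intro s hs s' hs'
  rcases le_total s s' with h | h
  · exact (key s hs s' hs' h).symm
  · exact key s' hs' s hs h
end

section
/- The function φ(s) = arctan(√2) + 2·arctan(tanh(√3·s/2)) is, on all of ℝ, the unique differentiable solution of the ordinary differential equation φ'(s) = cos φ(s) + √2·sin φ(s) with initial condition φ(0) = arctan(√2). -/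
open Real Set

lemma my_hasDerivAt_tanh (x : ℝ) :
    HasDerivAt Real.tanh (1 - Real.tanh x ^ 2) x := by
  have hc : Real.cosh x ≠ 0 := (Real.cosh_pos x).ne'
  have h : HasDerivAt (fun y => Real.sinh y / Real.cosh y)
      ((Real.cosh x * Real.cosh x - Real.sinh x * Real.sinh x) / Real.cosh x ^ 2) x :=
    (Real.hasDerivAt_sinh x).div (Real.hasDerivAt_cosh x) hc
  have heq : (Real.cosh x * Real.cosh x - Real.sinh x * Real.sinh x) / Real.cosh x ^ 2
      = 1 - Real.tanh x ^ 2 := by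
    rw [Real.tanh_eq_sinh_div_cosh, div_pow]
    have h1 : Real.cosh x ^ 2 - Real.sinh x ^ 2 = 1 := Real.cosh_sq_sub_sinh_sq x
    field_simp
  have : HasDerivAt (fun y => Real.sinh y / Real.cosh y) (1 - Real.tanh x ^ 2) x := heq ▸ h
  convert this using 2 with y
  rw [Real.tanh_eq_sinh_div_cosh]

lemma key_trig (t : ℝ) :
    Real.cos (Real.arctan (Real.sqrt 2) + 2 * Real.arctan t)
      + Real.sqrt 2 * Real.sin (Real.arctan (Real.sqrt 2) + 2 * Real.arctan t)
    = Real.sqrt 3 * ((1 - t ^ 2) / (1 + t ^ 2)) := by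
  have h1t : (0:ℝ) < 1 + t ^ 2 := by positivity
  have hA : Real.sqrt (1 + t ^ 2) ^ 2 = 1 + t ^ 2 := Real.sq_sqrt h1t.le
  have hApos : (0:ℝ) < Real.sqrt (1 + t ^ 2) := Real.sqrt_pos.mpr h1t
  have h2 : Real.sqrt 2 ^ 2 = 2 := Real.sq_sqrt (by norm_num)
  have h3 : Real.sqrt 3 ^ 2 = 3 := Real.sq_sqrt (by norm_num)
  have h3pos : (0:ℝ) < Real.sqrt 3 := Real.sqrt_pos.mpr (by norm_num)
  have hs2 : Real.sqrt (1 + Real.sqrt 2 ^ 2) = Real.sqrt 3 := by rw [h2]; norm_num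
  rw [Real.cos_add, Real.sin_add, Real.cos_two_mul, Real.sin_two_mul,
    Real.cos_arctan, Real.sin_arctan, Real.cos_arctan, Real.sin_arctan, hs2]
  field_simp
  linear_combination ((2 - (1 + t ^ 2)) * (1 + t ^ 2)) * h2 - ((1 - t ^ 2) * (1 + t ^ 2)) * h3 + (-t ^ 2 - t ^ 2 * Real.sqrt 2 ^ 2 + t ^ 2 * Real.sqrt 3 ^ 2 - 1 - Real.sqrt 2 ^ 2 - Real.sqrt 3 ^ 2) * hA

lemma phi_deriv (s : ℝ) :
    HasDerivAt (fun s =>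
        Real.arctan (Real.sqrt 2) + 2 * Real.arctan (Real.tanh (Real.sqrt 3 * s / 2)))
      (Real.cos (Real.arctan (Real.sqrt 2)
          + 2 * Real.arctan (Real.tanh (Real.sqrt 3 * s / 2)))
        + Real.sqrt 2 * Real.sin (Real.arctan (Real.sqrt 2)
          + 2 * Real.arctan (Real.tanh (Real.sqrt 3 * s / 2)))) s := by
  set u := Real.sqrt 3 * s / 2 with hu
  set t := Real.tanh u with ht
  have h1t : (0:ℝ) < 1 + t ^ 2 := by positivity
  have hlin : HasDerivAt (fun s : ℝ => Real.sqrt 3 * s / 2) (Real.sqrt 3 / 2) s := by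
    have := ((hasDerivAt_id s).const_mul (Real.sqrt 3)).div_const 2
    simpa using this
  have htanh : HasDerivAt (fun s : ℝ => Real.tanh (Real.sqrt 3 * s / 2))
      ((1 - t ^ 2) * (Real.sqrt 3 / 2)) s :=
    by have := (my_hasDerivAt_tanh u).comp s hlin; exact this
  have harc : HasDerivAt (fun s : ℝ => Real.arctan (Real.tanh (Real.sqrt 3 * s / 2)))
      ((1 / (1 + t ^ 2)) * ((1 - t ^ 2) * (Real.sqrt 3 / 2))) s :=
    by have := (Real.hasDerivAt_arctan t).comp s htanh; exact this
  have h := ((harc.const_mul 2).const_add (Real.arctan (Real.sqrt 2)))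
  have heq : 2 * ((1 / (1 + t ^ 2)) * ((1 - t ^ 2) * (Real.sqrt 3 / 2)))
      = Real.sqrt 3 * ((1 - t ^ 2) / (1 + t ^ 2)) := by
    field_simp
  rw [key_trig t]
  exact heq ▸ h

/-- `φ(s) = arctan √2 + 2 arctan(tanh(√3 s/2))` is, on all of `ℝ`,
the unique differentiable solution of `φ' = cos φ + √2 sin φ` with
`φ(0) = arctan √2`. -/
theorem stmt_4 (φ : ℝ → ℝ)
    (hφ : φ = fun s =>
      Real.arctan (Real.sqrt 2) + 2 * Real.arctan (Real.tanh (Real.sqrt 3 * s / 2))) :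
    (∀ s : ℝ, HasDerivAt φ (Real.cos (φ s) + Real.sqrt 2 * Real.sin (φ s)) s) ∧
    φ 0 = Real.arctan (Real.sqrt 2) ∧
    (∀ ψ : ℝ → ℝ, (∀ s : ℝ, DifferentiableAt ℝ ψ s) →
      (∀ s : ℝ, deriv ψ s = Real.cos (ψ s) + Real.sqrt 2 * Real.sin (ψ s)) →
      ψ 0 = Real.arctan (Real.sqrt 2) → ψ = φ) := by
  subst hφ
  have hderiv : ∀ s : ℝ, HasDerivAt
      (fun s => Real.arctan (Real.sqrt 2) + 2 * Real.arctan (Real.tanh (Real.sqrt 3 * s / 2)))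
      (Real.cos (Real.arctan (Real.sqrt 2)
          + 2 * Real.arctan (Real.tanh (Real.sqrt 3 * s / 2)))
        + Real.sqrt 2 * Real.sin (Real.arctan (Real.sqrt 2)
          + 2 * Real.arctan (Real.tanh (Real.sqrt 3 * s / 2)))) s := phi_deriv
  refine ⟨hderiv, by simp, ?_⟩
  intro ψ hψd hψ' hψ0
  -- the vector field
  set v : ℝ → ℝ → ℝ := fun _ x => Real.cos x + Real.sqrt 2 * Real.sin x with hv
  have hlip : ∀ τ : ℝ, LipschitzOnWith 3 (v τ) Set.univ := by
    intro τ
    rw [lipschitzOnWith_univ]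
    apply lipschitzWith_of_nnnorm_deriv_le
    · intro x
      exact ((Real.differentiable_cos x).add
        ((Real.differentiable_sin x).const_mul (Real.sqrt 2)))
    · intro x
      have hd : HasDerivAt (v τ) (-Real.sin x + Real.sqrt 2 * Real.cos x) x :=
        (Real.hasDerivAt_cos x).add ((Real.hasDerivAt_sin x).const_mul (Real.sqrt 2))
      rw [hd.deriv]
      have h2 : Real.sqrt 2 ≤ 2 := by
        nlinarith [Real.sq_sqrt (show (0:ℝ) ≤ 2 by norm_num), Real.sqrt_nonneg 2]
      have : |(-Real.sin x + Real.sqrt 2 * Real.cos x)| ≤ 3 := by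
        have := Real.neg_one_le_sin x
        have := Real.sin_le_one x
        have := Real.neg_one_le_cos x
        have := Real.cos_le_one x
        have h0 : (0:ℝ) ≤ Real.sqrt 2 := Real.sqrt_nonneg 2
        rw [abs_le]
        constructor <;> nlinarith [abs_le.mp (abs_cos_le_one x), abs_le.mp (abs_sin_le_one x)]
      simpa [← NNReal.coe_le_coe, Real.norm_eq_abs] using this
  funext s
  rcases eq_or_ne s 0 with rfl | hs
  · simpa using hψ0
  · have hmem : (0:ℝ) ∈ Set.Ioo (-(|s|+1)) (|s|+1) := by
      constructor <;> [nlinarith [abs_nonneg s]; nlinarith [abs_nonneg s]]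
    have hsmem : s ∈ Set.Ioo (-(|s|+1)) (|s|+1) := by
      constructor
      · nlinarith [neg_abs_le s]
      · nlinarith [le_abs_self s]
    have := ODE_solution_unique_of_mem_Ioo (v := v) (s := fun _ => Set.univ) (fun τ _ => hlip τ) hmem
      (f := ψ)
      (g := fun s => Real.arctan (Real.sqrt 2)
        + 2 * Real.arctan (Real.tanh (Real.sqrt 3 * s / 2)))
      (fun τ _ => ⟨by
        have h := (hψd τ).hasDerivAt
        rw [hψ' τ] at h
        exact h, trivial⟩)
      (fun τ _ => ⟨hderiv τ, trivial⟩)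
      (by simpa using hψ0)
    exact this hsmem
end

section
/- Let φ(s) = arctan(√2) + 2·arctan(tanh(√3·s/2)), Λ(s) = arctan(tanh(√3·s/2)) and ψ(s) = log(cosh(√3·s)). For any constants c₁ > 0 and c₂ ∈ ℝ, the functions y(s) = c₁·exp((2√2/3)·Λ(s) − (2/3)·ψ(s)) and θ(s) = (2√2/3)·Λ(s) + (1/3)·ψ(s) + c₂ satisfy y'(s) = √2·y(s)·cos φ(s) and θ'(s) = sin φ(s) for all s ∈ ℝ. -/
open Real

lemma hasDerivAt_tanh' (t : ℝ) : HasDerivAt Real.tanh (1 / Real.cosh t ^ 2) t := by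
  have h := (Real.hasDerivAt_sinh t).div (Real.hasDerivAt_cosh t) (Real.cosh_pos t).ne'
  have he : Real.tanh = fun x => Real.sinh x / Real.cosh x := funext fun x => Real.tanh_eq_sinh_div_cosh x
  rw [he]
  exact h.congr_deriv (by
  have := Real.cosh_sq_sub_sinh_sq t
  field_simp
  nlinarith [this])

/-- with `φ(s) = arctan √2 + 2 arctan(tanh(√3 s/2))`,
`Λ(s) = arctan(tanh(√3 s/2))` and `ψ(s) = log(cosh(√3 s))`, the functions
`y(s) = c₁ exp((2√2/3) Λ(s) − (2/3) ψ(s))` and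
`θ(s) = (2√2/3) Λ(s) + (1/3) ψ(s) + c₂` satisfy `y' = √2 y cos φ` and
`θ' = sin φ`. -/
theorem stmt_5 (φ Λ ψ y θ : ℝ → ℝ) (c₁ c₂ : ℝ) (hc₁ : 0 < c₁)
    (hφ : φ = fun s =>
      Real.arctan (Real.sqrt 2) + 2 * Real.arctan (Real.tanh (Real.sqrt 3 * s / 2)))
    (hΛ : Λ = fun s => Real.arctan (Real.tanh (Real.sqrt 3 * s / 2)))
    (hψ : ψ = fun s => Real.log (Real.cosh (Real.sqrt 3 * s)))
    (hy : y = fun s => c₁ * Real.exp (2 * Real.sqrt 2 / 3 * Λ s - 2 / 3 * ψ s))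
    (hθ : θ = fun s => 2 * Real.sqrt 2 / 3 * Λ s + 1 / 3 * ψ s + c₂) :
    ∀ s : ℝ, HasDerivAt y (Real.sqrt 2 * y s * Real.cos (φ s)) s ∧
      HasDerivAt θ (Real.sin (φ s)) s := by
  intro s
  set t : ℝ := Real.sqrt 3 * s / 2 with ht_def
  set T : ℝ := Real.tanh t with hT_def
  set C : ℝ := Real.cosh t with hC_def
  set S : ℝ := Real.sinh t with hS_def
  have hCpos : 0 < C := Real.cosh_pos t
  have hid : C ^ 2 - S ^ 2 = 1 := Real.cosh_sq_sub_sinh_sq t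
  have hTSC : T = S / C := Real.tanh_eq_sinh_div_cosh t
  have h3 : (Real.sqrt 3) ^ 2 = 3 := Real.sq_sqrt (by norm_num)
  have h2 : (Real.sqrt 2) ^ 2 = 2 := Real.sq_sqrt (by norm_num)
  have h3pos : (0:ℝ) < Real.sqrt 3 := Real.sqrt_pos.mpr (by norm_num)
  -- derivative of inner linear map
  have hlin : HasDerivAt (fun s : ℝ => Real.sqrt 3 * s / 2) (Real.sqrt 3 / 2) s := by
    simpa using ((hasDerivAt_id s).const_mul (Real.sqrt 3)).div_const 2
  have hlin2 : HasDerivAt (fun s : ℝ => Real.sqrt 3 * s) (Real.sqrt 3) s := by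
    simpa using (hasDerivAt_id s).const_mul (Real.sqrt 3)
  -- Λ derivative
  have hΛ' : HasDerivAt Λ ((1 / (1 + T ^ 2)) * ((1 / C ^ 2) * (Real.sqrt 3 / 2))) s := by
    rw [hΛ]
    exact (Real.hasDerivAt_arctan T).comp s ((hasDerivAt_tanh' t).comp s hlin)
  -- ψ derivative
  have hcosh_ne : Real.cosh (Real.sqrt 3 * s) ≠ 0 := (Real.cosh_pos _).ne'
  have hψ' : HasDerivAt ψ ((Real.cosh (Real.sqrt 3 * s))⁻¹ * (Real.sinh (Real.sqrt 3 * s) * Real.sqrt 3)) s := by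
    rw [hψ]
    exact (Real.hasDerivAt_log hcosh_ne).comp s ((Real.hasDerivAt_cosh _).comp s hlin2)
  -- rewrite the double angle: √3 * s = 2 * t
  have h2t : Real.sqrt 3 * s = 2 * t := by rw [ht_def]; ring
  have hcosh2 : Real.cosh (Real.sqrt 3 * s) = C ^ 2 + S ^ 2 := by
    rw [h2t, Real.cosh_two_mul]
  have hsinh2 : Real.sinh (Real.sqrt 3 * s) = 2 * S * C := by
    rw [h2t, Real.sinh_two_mul]
  have hsum_pos : (0:ℝ) < C ^ 2 + S ^ 2 := by nlinarith
  -- trig values of φ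
  have hsq : Real.sqrt (1 + Real.sqrt 2 ^ 2) = Real.sqrt 3 := by rw [h2]; norm_num
  have hsqT : Real.sqrt (1 + T ^ 2) ^ 2 = 1 + T ^ 2 :=
    Real.sq_sqrt (by positivity)
  have hsqT_pos : (0:ℝ) < Real.sqrt (1 + T ^ 2) := Real.sqrt_pos.mpr (by positivity)
  have hTpos : (0:ℝ) < 1 + T ^ 2 := by positivity
  have hcosφ : Real.cos (φ s) = (1 / Real.sqrt 3) * ((1 - T ^ 2) / (1 + T ^ 2))
      - (Real.sqrt 2 / Real.sqrt 3) * (2 * T / (1 + T ^ 2)) := by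
    rw [hφ]
    show Real.cos (Real.arctan (Real.sqrt 2) + 2 * Real.arctan T) = _
    simp only [Real.cos_add, Real.cos_arctan, Real.sin_arctan, hsq]
    rw [Real.cos_two_mul, Real.sin_two_mul, Real.cos_arctan, Real.sin_arctan]
    rw [div_pow, hsqT, one_pow]
    field_simp
    ring_nf
    rw [hsqT]; ring
  have hsinφ : Real.sin (φ s) = (Real.sqrt 2 / Real.sqrt 3) * ((1 - T ^ 2) / (1 + T ^ 2))
      + (1 / Real.sqrt 3) * (2 * T / (1 + T ^ 2)) := by
    rw [hφ]
    show Real.sin (Real.arctan (Real.sqrt 2) + 2 * Real.arctan T) = _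
    simp only [Real.sin_add, Real.cos_arctan, Real.sin_arctan, hsq]
    rw [Real.cos_two_mul, Real.sin_two_mul, Real.cos_arctan, Real.sin_arctan]
    rw [div_pow, hsqT, one_pow]
    field_simp
    ring_nf
    rw [hsqT]; ring
  -- relation 1 + T^2 and C
  have hT2 : 1 + T ^ 2 = (C ^ 2 + S ^ 2) / C ^ 2 := by
    rw [hTSC]; field_simp
  have hT1m : 1 - T ^ 2 = 1 / C ^ 2 := by
    rw [hTSC]; field_simp; linear_combination hid
  clear_value t T C S
  constructor
  · -- y part
    have hg : HasDerivAt (fun s => 2 * Real.sqrt 2 / 3 * Λ s - 2 / 3 * ψ s)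
        (2 * Real.sqrt 2 / 3 * ((1 / (1 + T ^ 2)) * ((1 / C ^ 2) * (Real.sqrt 3 / 2)))
          - 2 / 3 * ((Real.cosh (Real.sqrt 3 * s))⁻¹ * (Real.sinh (Real.sqrt 3 * s) * Real.sqrt 3))) s :=
      (hΛ'.const_mul _).sub (hψ'.const_mul _)
    have hyd : HasDerivAt y (c₁ * (Real.exp (2 * Real.sqrt 2 / 3 * Λ s - 2 / 3 * ψ s) *
        (2 * Real.sqrt 2 / 3 * ((1 / (1 + T ^ 2)) * ((1 / C ^ 2) * (Real.sqrt 3 / 2)))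
          - 2 / 3 * ((Real.cosh (Real.sqrt 3 * s))⁻¹ * (Real.sinh (Real.sqrt 3 * s) * Real.sqrt 3))))) s := by
      rw [hy]
      exact hg.exp.const_mul c₁
    have key : 2 * Real.sqrt 2 / 3 * ((1 / (1 + T ^ 2)) * ((1 / C ^ 2) * (Real.sqrt 3 / 2)))
          - 2 / 3 * ((Real.cosh (Real.sqrt 3 * s))⁻¹ * (Real.sinh (Real.sqrt 3 * s) * Real.sqrt 3))
        = Real.sqrt 2 * Real.cos (φ s) := by
      rw [hcosφ, hcosh2, hsinh2, hT1m, hT2, hTSC]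
      field_simp
      linear_combination (Real.sqrt 2 - 4 * C * S) * h3 + (6 * C * S) * h2
    convert hyd using 1
    have hys : y s = c₁ * Real.exp (2 * Real.sqrt 2 / 3 * Λ s - 2 / 3 * ψ s) := by rw [hy]
    rw [hys, key]
    ring
  · -- θ part
    have hθd : HasDerivAt θ
        (2 * Real.sqrt 2 / 3 * ((1 / (1 + T ^ 2)) * ((1 / C ^ 2) * (Real.sqrt 3 / 2)))
          + 1 / 3 * ((Real.cosh (Real.sqrt 3 * s))⁻¹ * (Real.sinh (Real.sqrt 3 * s) * Real.sqrt 3))) s := by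
      rw [hθ]
      exact ((hΛ'.const_mul _).add (hψ'.const_mul _)).add_const c₂
    have key2 : Real.sin (φ s)
        = 2 * Real.sqrt 2 / 3 * ((1 / (1 + T ^ 2)) * ((1 / C ^ 2) * (Real.sqrt 3 / 2)))
          + 1 / 3 * ((Real.cosh (Real.sqrt 3 * s))⁻¹ * (Real.sinh (Real.sqrt 3 * s) * Real.sqrt 3)) := by
      rw [hsinφ, hcosh2, hsinh2, hT1m, hT2, hTSC]
      field_simp
      linear_combination (-(Real.sqrt 2 + C * S * 2)) * h3
    rw [key2]
    exact hθd
end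

section
/- Let I ⊆ ℝ be a nontrivial open interval and let y : I → ℝ be a twice differentiable function with y(s) > 0 for all s ∈ I, satisfying y'(s)² = 2·y(s)·(y''(s) + y(s)) for all s ∈ I. Then there exist constants c > 0 and s₀ ∈ ℝ such that y(s) = c·(1 + cos(√2·(s − s₀))) for all s ∈ I. -/
/-- A function with zero derivative on an open interval is constant there. -/
lemma stmt8_const_on (a b : ℝ) (f : ℝ → ℝ)
    (hf : ∀ s ∈ Set.Ioo a b, HasDerivAt f 0 s) :
    ∀ p ∈ Set.Ioo a b, ∀ q ∈ Set.Ioo a b, f p = f q := by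
  have key : ∀ p q, p ∈ Set.Ioo a b → q ∈ Set.Ioo a b → p ≤ q → f q = f p := by
    intro p q hp hq hpq
    have hsub : Set.Icc p q ⊆ Set.Ioo a b := fun x hx =>
      ⟨lt_of_lt_of_le hp.1 hx.1, lt_of_le_of_lt hx.2 hq.2⟩
    exact constant_of_has_deriv_right_zero
      (fun x hx => (hf x (hsub hx)).continuousAt.continuousWithinAt)
      (fun x hx => (hf x (hsub ⟨hx.1, le_of_lt hx.2⟩)).hasDerivWithinAt) q ⟨hpq, le_refl q⟩
  intro p hp q hq
  rcases le_total p q with h | h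
  · exact (key p q hp hq h).symm
  · exact key q p hq hp h

/-- a positive twice differentiable solution of
`y'² = 2 y (y'' + y)` on a nontrivial open interval is of the form
`y(s) = c (1 + cos(√2 (s - s₀)))` with `c > 0`. -/
theorem stmt_8 (a b : ℝ) (hab : a < b) (y : ℝ → ℝ)
    (hpos : ∀ s ∈ Set.Ioo a b, 0 < y s)
    (hy : ∀ s ∈ Set.Ioo a b, DifferentiableAt ℝ y s)
    (hy' : ∀ s ∈ Set.Ioo a b, DifferentiableAt ℝ (deriv y) s)
    (hode : ∀ s ∈ Set.Ioo a b,
      (deriv y s) ^ 2 = 2 * y s * (deriv (deriv y) s + y s)) :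
    ∃ c s₀ : ℝ, 0 < c ∧ ∀ s ∈ Set.Ioo a b,
      y s = c * (1 + Real.cos (Real.sqrt 2 * (s - s₀))) := by
  have h2 : (Real.sqrt 2) ^ 2 = 2 := Real.sq_sqrt (by norm_num)
  have hs2pos : (0:ℝ) < Real.sqrt 2 := Real.sqrt_pos.mpr (by norm_num)
  set ω : ℝ := Real.sqrt 2 / 2 with hωdef
  have hωpos : 0 < ω := by positivity
  have hωne : ω ≠ 0 := ne_of_gt hωpos
  have hω2 : ω ^ 2 = 1 / 2 := by
    rw [hωdef, div_pow, h2]; norm_num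
  set u : ℝ → ℝ := fun t => Real.sqrt (y t) with hu_def
  set v : ℝ → ℝ := fun t => deriv y t / (2 * Real.sqrt (y t)) with hv_def
  -- u' = v
  have hud : ∀ s ∈ Set.Ioo a b, HasDerivAt u (v s) s := by
    intro s hs
    have hys := hpos s hs
    have h1 : HasDerivAt y (deriv y s) s := (hy s hs).hasDerivAt
    have h2' := (Real.hasDerivAt_sqrt (ne_of_gt hys)).comp s h1
    have : v s = 1 / (2 * Real.sqrt (y s)) * deriv y s := by
      rw [hv_def]; ring
    rw [this]
    exact h2'
  -- v' = -u/2
  have hvd : ∀ s ∈ Set.Ioo a b, HasDerivAt v (-(u s) / 2) s := by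
    intro s hs
    have hys := hpos s hs
    have hq : 0 < Real.sqrt (y s) := Real.sqrt_pos.mpr hys
    have hq2 : Real.sqrt (y s) ^ 2 = y s := Real.sq_sqrt hys.le
    have h1 : HasDerivAt (deriv y) (deriv (deriv y) s) s := (hy' s hs).hasDerivAt
    have hsq : HasDerivAt (fun t => Real.sqrt (y t))
        (1 / (2 * Real.sqrt (y s)) * deriv y s) s :=
      (Real.hasDerivAt_sqrt (ne_of_gt hys)).comp s (hy s hs).hasDerivAt
    have hden : HasDerivAt (fun t => 2 * Real.sqrt (y t))
        (2 * (1 / (2 * Real.sqrt (y s)) * deriv y s)) s := hsq.const_mul 2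
    have hne : 2 * Real.sqrt (y s) ≠ 0 := by positivity
    have hdiv := h1.div hden hne
    have hode' : deriv y s ^ 2
        = 2 * Real.sqrt (y s) ^ 2 * (deriv (deriv y) s + Real.sqrt (y s) ^ 2) := by
      rw [hq2]; exact hode s hs
    have heq : (deriv (deriv y) s * (2 * Real.sqrt (y s))
          - deriv y s * (2 * (1 / (2 * Real.sqrt (y s)) * deriv y s)))
          / (2 * Real.sqrt (y s)) ^ 2 = -(u s) / 2 := by
      rw [hu_def]
      field_simp
      nlinarith [hode', hq, hq2, sq_nonneg (Real.sqrt (y s))]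
    rw [← heq]
    exact hdiv
  -- derivative helpers for cos(ω t), sin(ω t)
  have hid : ∀ s : ℝ, HasDerivAt (fun t : ℝ => ω * t) ω s := by
    intro s; simpa using (hasDerivAt_id s).const_mul ω
  have hcos : ∀ s : ℝ, HasDerivAt (fun t => Real.cos (ω * t)) (-Real.sin (ω * s) * ω) s :=
    fun s => (Real.hasDerivAt_cos (ω * s)).comp s (hid s)
  have hsin : ∀ s : ℝ, HasDerivAt (fun t => Real.sin (ω * t)) (Real.cos (ω * s) * ω) s :=
    fun s => (Real.hasDerivAt_sin (ω * s)).comp s (hid s)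
  -- the two conserved quantities
  set C1 : ℝ → ℝ := fun t => u t * Real.cos (ω * t) - v t / ω * Real.sin (ω * t) with hC1def
  set C2 : ℝ → ℝ := fun t => u t * Real.sin (ω * t) + v t / ω * Real.cos (ω * t) with hC2def
  have hC1d : ∀ s ∈ Set.Ioo a b, HasDerivAt C1 0 s := by
    intro s hs
    have h := ((hud s hs).mul (hcos s)).sub (((hvd s hs).div_const ω).mul (hsin s))
    have h0 : v s * Real.cos (ω * s) + u s * (-Real.sin (ω * s) * ω)
        - (-(u s) / 2 / ω * Real.sin (ω * s) + v s / ω * (Real.cos (ω * s) * ω)) = 0 := by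
      field_simp
      linear_combination ((-1/2) * Real.sqrt (y s) * Real.sin (ω * s)) * h2
    rw [← h0]
    exact h
  have hC2d : ∀ s ∈ Set.Ioo a b, HasDerivAt C2 0 s := by
    intro s hs
    have h := ((hud s hs).mul (hsin s)).add (((hvd s hs).div_const ω).mul (hcos s))
    have h0 : v s * Real.sin (ω * s) + u s * (Real.cos (ω * s) * ω)
        + (-(u s) / 2 / ω * Real.cos (ω * s) + v s / ω * (-Real.sin (ω * s) * ω)) = 0 := by
      field_simp
      linear_combination ((1/2) * Real.sqrt (y s) * Real.cos (ω * s)) * h2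
    rw [← h0]
    exact h
  set m : ℝ := (a + b) / 2 with hmdef
  have hm : m ∈ Set.Ioo a b := ⟨by rw [hmdef]; linarith, by rw [hmdef]; linarith⟩
  set K1 : ℝ := C1 m with hK1def
  set K2 : ℝ := C2 m with hK2def
  have hC1c := stmt8_const_on a b C1 hC1d
  have hC2c := stmt8_const_on a b C2 hC2d
  -- representation of u
  have hrep : ∀ s ∈ Set.Ioo a b, u s = K1 * Real.cos (ω * s) + K2 * Real.sin (ω * s) := by
    intro s hs
    have e1 : C1 s = K1 := hC1c s hs m hm
    have e2 : C2 s = K2 := hC2c s hs m hm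
    have pyth := Real.sin_sq_add_cos_sq (ω * s)
    rw [hC1def] at e1
    rw [hC2def] at e2
    simp only at e1 e2
    linear_combination Real.cos (ω * s) * e1 + Real.sin (ω * s) * e2 - u s * pyth
  -- z = K1 + K2 i is nonzero
  have hum : 0 < u m := Real.sqrt_pos.mpr (hpos m hm)
  set z : ℂ := ⟨K1, K2⟩ with hzdef
  have hz : z ≠ 0 := by
    intro h
    have hre : K1 = 0 := by
      have := congrArg Complex.re h; simpa [hzdef] using this
    have him : K2 = 0 := by
      have := congrArg Complex.im h; simpa [hzdef] using this
    have := hrep m hm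
    rw [hre, him] at this
    simp at this
    linarith [hum, this]
  set R : ℝ := ‖z‖ with hRdef
  have hRpos : 0 < R := by
    rw [hRdef]; exact norm_pos_iff.mpr hz
  set φ : ℝ := z.arg with hφdef
  have hK1 : K1 = R * Real.cos φ := by
    rw [hφdef, Complex.cos_arg hz, hRdef]
    field_simp
    rfl
  have hK2 : K2 = R * Real.sin φ := by
    rw [hφdef, Complex.sin_arg, hRdef]
    field_simp
    rfl
  refine ⟨R ^ 2 / 2, Real.sqrt 2 * φ, by positivity, ?_⟩
  intro s hs
  have hy2 : y s = u s ^ 2 := (Real.sq_sqrt (hpos s hs).le).symm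
  have harg : Real.sqrt 2 * (s - Real.sqrt 2 * φ) = 2 * (ω * s - φ) := by
    rw [hωdef]
    linear_combination (-φ) * h2
  rw [hy2, hrep s hs, hK1, hK2, harg]
  have : R * Real.cos φ * Real.cos (ω * s) + R * Real.sin φ * Real.sin (ω * s)
      = R * Real.cos (ω * s - φ) := by
    rw [Real.cos_sub]; ring
  rw [this, mul_pow, Real.cos_sq]
  ring
end

section
/- Let I ⊆ ℝ be a nontrivial open interval and let x, θ : I → ℝ be twice differentiable functions with θ'(s) ≠ 0 for all s ∈ I, such that for every s ∈ I and every real t > 0 one has t²·(x'(s)·θ''(s) − θ'(s)·x''(s) + 2·x(s)·θ'(s)³) + 2·x(s)·x'(s)·θ'(s)²·t + x(s)·θ'(s)·x'(s)² = 0. Then x(s) = 0 for all s ∈ I. -/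
/-- classification of 𝒜-invariant V-translators with `θ' ≠ 0`:
the polynomial identity in `t > 0` forces `x = 0` on the interval. -/
theorem stmt_9 (a b : ℝ) (hab : a < b) (x θ : ℝ → ℝ)
    (hx : ∀ s ∈ Set.Ioo a b, DifferentiableAt ℝ x s)
    (hx' : ∀ s ∈ Set.Ioo a b, DifferentiableAt ℝ (deriv x) s)
    (hθ : ∀ s ∈ Set.Ioo a b, DifferentiableAt ℝ θ s)
    (hθ' : ∀ s ∈ Set.Ioo a b, DifferentiableAt ℝ (deriv θ) s)
    (hθne : ∀ s ∈ Set.Ioo a b, deriv θ s ≠ 0)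
    (heq : ∀ s ∈ Set.Ioo a b, ∀ t : ℝ, 0 < t →
      t ^ 2 * (deriv x s * deriv (deriv θ) s - deriv θ s * deriv (deriv x) s
          + 2 * x s * (deriv θ s) ^ 3)
        + 2 * x s * deriv x s * (deriv θ s) ^ 2 * t
        + x s * deriv θ s * (deriv x s) ^ 2 = 0) :
    ∀ s ∈ Set.Ioo a b, x s = 0 := by
  -- coefficient extraction
  have hcoef : ∀ s ∈ Set.Ioo a b,
      (deriv x s * deriv (deriv θ) s - deriv θ s * deriv (deriv x) s
          + 2 * x s * (deriv θ s) ^ 3) = 0 ∧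
      2 * x s * deriv x s * (deriv θ s) ^ 2 = 0 ∧
      x s * deriv θ s * (deriv x s) ^ 2 = 0 := by
    intro s hs
    have h1 := heq s hs 1 one_pos
    have h2 := heq s hs 2 two_pos
    have h3 := heq s hs 3 (by norm_num)
    norm_num at h1 h2 h3
    refine ⟨by linarith, by linarith, by linarith⟩
  -- where x ≠ 0, deriv x = 0
  have hdx : ∀ s ∈ Set.Ioo a b, x s ≠ 0 → deriv x s = 0 := by
    intro s hs hxs
    have hC := (hcoef s hs).2.2
    have := hθne s hs
    have h2 : (deriv x s) ^ 2 = 0 := by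
      rcases mul_eq_zero.mp hC with h | h
      · rcases mul_eq_zero.mp h with h' | h'
        · exact absurd h' hxs
        · exact absurd h' this
      · exact h
    exact pow_eq_zero_iff (n := 2) (by norm_num) |>.mp h2
  intro s hs
  by_contra hxs
  -- x ≠ 0 in a neighborhood of s, hence deriv x = 0 near s
  have hcont : ContinuousAt x s := (hx s hs).continuousAt
  have hne : ∀ᶠ s' in nhds s, x s' ≠ 0 :=
    hcont.eventually_ne hxs
  have hIoo : ∀ᶠ s' in nhds s, s' ∈ Set.Ioo a b :=
    (isOpen_Ioo).eventually_mem hs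
  have hdx0 : deriv x =ᶠ[nhds s] (fun _ => 0) := by
    filter_upwards [hne, hIoo] with s' h1 h2
    exact hdx s' h2 h1
  have hd2 : deriv (deriv x) s = 0 := by
    have := hdx0.deriv_eq
    rw [this]
    simp
  have hA := (hcoef s hs).1
  have hxd : deriv x s = 0 := hdx s hs hxs
  rw [hxd, hd2] at hA
  have hθs := hθne s hs
  have : x s * (deriv θ s) ^ 3 = 0 := by linarith
  rcases mul_eq_zero.mp this with h | h
  · exact hxs h
  · exact hθs (pow_eq_zero_iff (by norm_num) |>.mp h)
end

section
/- Let I ⊆ ℝ be a nontrivial open interval, H ∈ ℝ a constant, and φ, x, y : I → ℝ differentiable functions with y(s) > 0 for all s ∈ I, satisfying x'(s) = 2·y(s)·cos φ(s), y'(s) = 2·y(s)·sin φ(s), φ'(s) = 2·(H − cos φ(s)), and φ'(s) = −(y(s)·cos φ(s) + x(s)·sin φ(s))/y(s) for all s ∈ I. Then H = 0 and cos φ(s) = 0 for all s ∈ I. -/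
/-- a rotational V-translator with constant mean curvature `H`
(i.e. `x' = 2 y cos φ`, `y' = 2 y sin φ`, `φ' = 2(H - cos φ)` and
`φ' = -(y cos φ + x sin φ)/y` with `y > 0`) satisfies `H = 0` and
`cos φ ≡ 0`. -/
theorem stmt_11 (a b : ℝ) (hab : a < b) (H : ℝ) (φ x y : ℝ → ℝ)
    (hpos : ∀ s ∈ Set.Ioo a b, 0 < y s)
    (hdx : ∀ s ∈ Set.Ioo a b, HasDerivAt x (2 * y s * Real.cos (φ s)) s)
    (hdy : ∀ s ∈ Set.Ioo a b, HasDerivAt y (2 * y s * Real.sin (φ s)) s)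
    (hdφ₁ : ∀ s ∈ Set.Ioo a b, HasDerivAt φ (2 * (H - Real.cos (φ s))) s)
    (hdφ₂ : ∀ s ∈ Set.Ioo a b,
      HasDerivAt φ (-(y s * Real.cos (φ s) + x s * Real.sin (φ s)) / y s) s) :
    H = 0 ∧ ∀ s ∈ Set.Ioo a b, Real.cos (φ s) = 0 := by
  -- Key pointwise identity from uniqueness of the derivative of φ
  have key : ∀ s ∈ Set.Ioo a b,
      x s * Real.sin (φ s) = y s * Real.cos (φ s) - 2 * H * y s := by
    intro s hs
    have h := (hdφ₁ s hs).unique (hdφ₂ s hs)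
    have hy := (hpos s hs).ne'
    field_simp at h
    nlinarith [h]
  -- the function g = x sin φ - (y cos φ - 2 H y) is identically 0 on Ioo, so its
  -- derivative vanishes there
  have hg0 : ∀ s ∈ Set.Ioo a b,
      HasDerivAt (fun u => x u * Real.sin (φ u) -
        (y u * Real.cos (φ u) - 2 * H * y u)) 0 s := by
    intro s hs
    apply (hasDerivAt_const s (0 : ℝ)).congr_of_eventuallyEq
    filter_upwards [Ioo_mem_nhds hs.1 hs.2] with u hu
    rw [key u hu]; ring
  have hderiv : ∀ s ∈ Set.Ioo a b,
      2 * y s * Real.cos (φ s) * Real.sin (φ s) +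
        x s * (Real.cos (φ s) * (2 * (H - Real.cos (φ s)))) -
      (2 * y s * Real.sin (φ s) * Real.cos (φ s) +
        y s * (-Real.sin (φ s) * (2 * (H - Real.cos (φ s)))) -
        2 * H * (2 * y s * Real.sin (φ s))) = 0 := by
    intro s hs
    have hD : HasDerivAt (fun u => x u * Real.sin (φ u) -
        (y u * Real.cos (φ u) - 2 * H * y u))
        (2 * y s * Real.cos (φ s) * Real.sin (φ s) +
          x s * (Real.cos (φ s) * (2 * (H - Real.cos (φ s)))) -
        (2 * y s * Real.sin (φ s) * Real.cos (φ s) +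
          y s * (-Real.sin (φ s) * (2 * (H - Real.cos (φ s)))) -
          2 * H * (2 * y s * Real.sin (φ s)))) s :=
      ((hdx s hs).mul (hdφ₁ s hs).sin).sub
        (((hdy s hs).mul (hdφ₁ s hs).cos).sub ((hdy s hs).const_mul (2 * H)))
    exact hD.unique (hg0 s hs)
  -- consequence: (1 + 2 H²) cos φ = 3 H on Ioo
  have hc : ∀ s ∈ Set.Ioo a b, (1 + 2 * H ^ 2) * Real.cos (φ s) = 3 * H := by
    intro s hs
    have e1 := key s hs
    have e2 := hderiv s hs
    have e3 := Real.sin_sq_add_cos_sq (φ s)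
    have hy := hpos s hs
    have hmul : 2 * y s * ((1 + 2 * H ^ 2) * Real.cos (φ s) - 3 * H) = 0 := by
      linear_combination (-(Real.sin (φ s))) * e2 +
        2 * Real.cos (φ s) * (H - Real.cos (φ s)) * e1 +
        2 * y s * (3 * H - Real.cos (φ s)) * e3
    have h2y : (2 : ℝ) * y s ≠ 0 := by positivity
    have := (mul_eq_zero.1 hmul).resolve_left h2y
    linarith
  set s₀ : ℝ := (a + b) / 2 with hs₀def
  have hs₀ : s₀ ∈ Set.Ioo a b := ⟨by simp only [hs₀def]; linarith, by simp only [hs₀def]; linarith⟩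
  have hH : H = 0 := by
    by_cases hHc : H = Real.cos (φ s₀)
    · -- H = cos φ s₀ : then 2H(H²-1)=0
      have h1 := hc s₀ hs₀
      rw [← hHc] at h1
      have h2 : 2 * H * (H ^ 2 - 1) = 0 := by linarith [h1]; 
      rcases mul_eq_zero.1 h2 with h3 | h3
      · rcases mul_eq_zero.1 h3 with h4 | h4
        · norm_num at h4
        · exact h4
      · -- H² = 1, cos φ s₀ = H, so sin φ s₀ = 0; key forces H y = 0, contradiction
        exfalso
        have hH2 : H ^ 2 = 1 := by linarith
        have hsin2 : Real.sin (φ s₀) ^ 2 = 0 := by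
          have := Real.sin_sq_add_cos_sq (φ s₀)
          rw [← hHc] at this; nlinarith
        have hsin : Real.sin (φ s₀) = 0 := by
          exact pow_eq_zero_iff (n := 2) (by norm_num) |>.1 hsin2
        have e1 := key s₀ hs₀
        rw [hsin, ← hHc] at e1
        have hy := hpos s₀ hs₀
        have h5 : H * y s₀ = 0 := by linarith
        rcases mul_eq_zero.1 h5 with h6 | h6
        · rw [h6] at hH2; norm_num at hH2
        · linarith
    · -- H ≠ cos φ s₀ : cos φ is the same constant everywhere, sin φ ≡ 0
      exfalso
      have h1H2 : (0:ℝ) < 1 + 2 * H ^ 2 := by positivity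
      have hcs : ∀ s ∈ Set.Ioo a b, Real.cos (φ s) = Real.cos (φ s₀) := by
        intro s hs
        have := hc s hs
        have h0 := hc s₀ hs₀
        have : (1 + 2 * H ^ 2) * Real.cos (φ s) =
            (1 + 2 * H ^ 2) * Real.cos (φ s₀) := by linarith
        exact mul_left_cancel₀ h1H2.ne' this
      have hsin : ∀ s ∈ Set.Ioo a b, Real.sin (φ s) = 0 := by
        intro s hs
        have hdc : HasDerivAt (fun u => Real.cos (φ u))
            (-Real.sin (φ s) * (2 * (H - Real.cos (φ s)))) s := (hdφ₁ s hs).cos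
        have hdc0 : HasDerivAt (fun u => Real.cos (φ u)) 0 s := by
          apply (hasDerivAt_const s (Real.cos (φ s₀))).congr_of_eventuallyEq
          filter_upwards [Ioo_mem_nhds hs.1 hs.2] with u hu
          exact hcs u hu
        have h0 := hdc.unique hdc0
        have hne : H - Real.cos (φ s) ≠ 0 := by
          rw [hcs s hs]
          exact sub_ne_zero.2 hHc
        have := mul_eq_zero.1 h0
        rcases this with h | h
        · linarith [neg_eq_zero.1 h]
        · exact absurd (by linarith : H - Real.cos (φ s) = 0) hne
      -- sin ∘ φ ≡ 0, so its derivative at s₀ vanishes: cos φ s₀ * 2(H - cos φ s₀) = 0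
      have hds : HasDerivAt (fun u => Real.sin (φ u))
          (Real.cos (φ s₀) * (2 * (H - Real.cos (φ s₀)))) s₀ := (hdφ₁ s₀ hs₀).sin
      have hds0 : HasDerivAt (fun u => Real.sin (φ u)) 0 s₀ := by
        apply (hasDerivAt_const s₀ (0:ℝ)).congr_of_eventuallyEq
        filter_upwards [Ioo_mem_nhds hs₀.1 hs₀.2] with u hu
        exact hsin u hu
      have h0 := hds.unique hds0
      have hcos0 : Real.cos (φ s₀) = 0 := by
        rcases mul_eq_zero.1 h0 with h | h
        · exact h
        · exact absurd (by linarith : H = Real.cos (φ s₀)) hHc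
      have := hc s₀ hs₀
      rw [hcos0] at this
      have : H = 0 := by linarith
      exact hHc (by rw [this, hcos0])
  refine ⟨hH, fun s hs => ?_⟩
  have := hc s hs
  rw [hH] at this
  linarith
end

section
/- Let I ⊆ ℝ be a nontrivial open interval and let x, θ : I → ℝ be twice differentiable functions such that for every s ∈ I and every real t > 0 one has 4·t²·(x'(s)·θ''(s) − x''(s)·θ'(s)) + (x(s)² − t²)·θ'(s)·(x'(s)² + (x'(s) + 2·t·θ'(s))²) = 0. Then θ is constant on I. -/
/-- classification of 𝒜-invariant W-translators: the polynomial
identity in `t > 0` forces `θ` to be constant on the interval. -/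
theorem stmt_12 (a b : ℝ) (hab : a < b) (x θ : ℝ → ℝ)
    (hx : ∀ s ∈ Set.Ioo a b, DifferentiableAt ℝ x s)
    (hx' : ∀ s ∈ Set.Ioo a b, DifferentiableAt ℝ (deriv x) s)
    (hθ : ∀ s ∈ Set.Ioo a b, DifferentiableAt ℝ θ s)
    (hθ' : ∀ s ∈ Set.Ioo a b, DifferentiableAt ℝ (deriv θ) s)
    (heq : ∀ s ∈ Set.Ioo a b, ∀ t : ℝ, 0 < t →
      4 * t ^ 2 * (deriv x s * deriv (deriv θ) s - deriv (deriv x) s * deriv θ s)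
        + (x s ^ 2 - t ^ 2) * deriv θ s *
          ((deriv x s) ^ 2 + (deriv x s + 2 * t * deriv θ s) ^ 2) = 0) :
    ∀ s ∈ Set.Ioo a b, ∀ s' ∈ Set.Ioo a b, θ s = θ s' := by
  have hd0 : ∀ s ∈ Set.Ioo a b, deriv θ s = 0 := by
    intro s hs
    have h1 := heq s hs 1 one_pos
    have h2 := heq s hs 2 (by norm_num)
    have h3 := heq s hs 3 (by norm_num)
    have h4 := heq s hs 4 (by norm_num)
    have h5 := heq s hs 5 (by norm_num)
    have hcube : (deriv θ s) ^ 3 = 0 := by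
      linear_combination (-(1:ℝ)/96) * (h1 - 4*h2 + 6*h3 - 4*h4 + h5)
    exact pow_eq_zero_iff (n := 3) (by norm_num) |>.mp hcube
  intro s hs s' hs'
  have hconv : Convex ℝ (Set.Ioo a b) := convex_Ioo a b
  refine hconv.is_const_of_fderivWithin_eq_zero (fun z hz => (hθ z hz).differentiableWithinAt)
    (fun z hz => ?_) hs hs'
  have hopen : IsOpen (Set.Ioo a b) := isOpen_Ioo
  rw [fderivWithin_of_isOpen hopen hz]
  have h := (hθ z hz).hasDerivAt
  rw [hd0 z hz] at h
  have h0 : HasFDerivAt θ (0 : ℝ →L[ℝ] ℝ) z := by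
    simpa using h.hasFDerivAt.congr_fderiv (by ext v; simp)
  exact h0.fderiv
end

section
/- Let H be a real constant with H > 1 and set k = √(H² − 1). Then the function φ(s) = 2·arctan((H − 1)·tan(k·s)/k), defined on the interval (−π/(2k), π/(2k)), satisfies φ'(s) = 2·H − 2·cos φ(s) for all s in that interval. -/
/-- for `H > 1` and `k = √(H² - 1)`, the function
`φ(s) = 2 arctan((H-1) tan(k s) / k)` solves `φ' = 2H - 2 cos φ` on the
interval `(-π/(2k), π/(2k))`. -/
theorem stmt_15 (H : ℝ) (hH : 1 < H) (k : ℝ) (hk : k = Real.sqrt (H ^ 2 - 1))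
    (φ : ℝ → ℝ)
    (hφ : φ = fun s => 2 * Real.arctan ((H - 1) * Real.tan (k * s) / k)) :
    ∀ s ∈ Set.Ioo (-(Real.pi / (2 * k))) (Real.pi / (2 * k)),
      HasDerivAt φ (2 * H - 2 * Real.cos (φ s)) s := by
  subst hφ
  have hk2 : (0:ℝ) < H ^ 2 - 1 := by nlinarith
  have hkpos : 0 < k := hk ▸ Real.sqrt_pos.mpr hk2
  have hksq : k ^ 2 = H ^ 2 - 1 := by rw [hk, Real.sq_sqrt hk2.le]
  intro s hs
  have h1 : k * s ∈ Set.Ioo (-(Real.pi/2)) (Real.pi/2) := by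
    constructor
    · have h := hs.1
      have := mul_lt_mul_of_pos_left h hkpos
      calc -(Real.pi/2) = k * (-(Real.pi/(2*k))) := by field_simp
        _ < k * s := this
    · have h := hs.2
      calc k * s < k * (Real.pi/(2*k)) := mul_lt_mul_of_pos_left h hkpos
        _ = Real.pi/2 := by field_simp
  have hc : Real.cos (k * s) ≠ 0 := (Real.cos_pos_of_mem_Ioo h1).ne'
  set c := Real.cos (k*s) with hcdef
  set T := Real.tan (k*s) with hTdef
  have hpyth : c^2 * (1 + T^2) = 1 := by
    have h2 := Real.sin_sq_add_cos_sq (k*s)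
    have hTc : T * c = Real.sin (k*s) := by
      rw [hTdef, Real.tan_eq_sin_div_cos, ← hcdef]; field_simp
    have h3 : T^2 * c^2 = Real.sin (k*s)^2 := by rw [← hTc]; ring
    linear_combination h2 + h3
  set u : ℝ := (H - 1) * T / k with hudef
  have hd1 : HasDerivAt (fun s : ℝ => Real.tan (k*s)) (1/c^2 * k) s := by
    have := (Real.hasDerivAt_tan hc).comp s ((hasDerivAt_id s).const_mul k)
    simpa [Function.comp_def, ← hcdef] using this
  have hd2 : HasDerivAt (fun s : ℝ => (H - 1) * Real.tan (k*s) / k)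
      ((H - 1) * (1/c^2 * k) / k) s := (hd1.const_mul (H-1)).div_const k
  have hd3 : HasDerivAt (fun s : ℝ => 2 * Real.arctan ((H - 1) * Real.tan (k*s) / k))
      (2 * (1 / (1 + u^2) * ((H - 1) * (1/c^2 * k) / k))) s := by
    exact (((Real.hasDerivAt_arctan u).comp s hd2).const_mul 2)
  convert hd3 using 1
  have hcos : Real.cos (2 * Real.arctan u) = 2 * (1 / (1 + u^2)) - 1 := by
    rw [Real.cos_two_mul, Real.cos_arctan]
    rw [div_pow, one_pow, Real.sq_sqrt (by positivity)]
  simp only [← hTdef, ← hudef, hcos]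
  have h1u : (0:ℝ) < 1 + u^2 := by positivity
  rw [hudef]
  field_simp
  linear_combination ((H-1)*k^2) * hpyth -
    ((H-1)*T^2*c^2) * hksq
end

section
/- There do not exist a nontrivial open interval I ⊆ ℝ, a real constant H, and differentiable functions φ, x, y : I → ℝ with y(s) > 0 for all s ∈ I, satisfying simultaneously x'(s) = 2·y(s)·cos φ(s), y'(s) = 2·y(s)·sin φ(s), φ'(s) = 2·(H − cos φ(s)), and φ'(s)/2 + cos φ(s) = ((y(s)² − x(s)²)/(4·y(s)))·sin φ(s) + (x(s)/2)·cos φ(s) for all s ∈ I. -/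
/-- there are no rotational W-translators with constant mean
curvature: no nontrivial open interval carries differentiable `φ, x, y` with
`y > 0` satisfying `x' = 2 y cos φ`, `y' = 2 y sin φ`, `φ' = 2(H - cos φ)` and
`φ'/2 + cos φ = ((y² - x²)/(4y)) sin φ + (x/2) cos φ`. -/
theorem stmt_16 :
    ¬ ∃ (a b : ℝ) (_ : a < b) (H : ℝ) (φ x y : ℝ → ℝ),
      (∀ s ∈ Set.Ioo a b, 0 < y s) ∧
      (∀ s ∈ Set.Ioo a b, HasDerivAt x (2 * y s * Real.cos (φ s)) s) ∧
      (∀ s ∈ Set.Ioo a b, HasDerivAt y (2 * y s * Real.sin (φ s)) s) ∧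
      (∀ s ∈ Set.Ioo a b, HasDerivAt φ (2 * (H - Real.cos (φ s))) s) ∧
      (∀ s ∈ Set.Ioo a b,
        deriv φ s / 2 + Real.cos (φ s) =
          (y s ^ 2 - x s ^ 2) / (4 * y s) * Real.sin (φ s)
            + x s / 2 * Real.cos (φ s)) := by
  rintro ⟨a, b, hab, H, φ, x, y, hy0, hx, hy, hφ, heq⟩
  -- The translator quantity Q equals H pointwise
  have hQH : ∀ s ∈ Set.Ioo a b,
      (y s ^ 2 - x s ^ 2) / (4 * y s) * Real.sin (φ s) + x s / 2 * Real.cos (φ s) = H := by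
    intro s hs
    have h := heq s hs
    rw [(hφ s hs).deriv] at h
    linarith [h]
  -- E1 in polynomial form : (y²-x²) sin + 2xy cos = 4Hy
  have hE1 : ∀ s ∈ Set.Ioo a b,
      (y s ^ 2 - x s ^ 2) * Real.sin (φ s) + 2 * x s * y s * Real.cos (φ s)
        = 4 * H * y s := by
    intro s hs
    have h := hQH s hs
    have hys : y s ≠ 0 := (hy0 s hs).ne'
    field_simp at h
    linarith [h]
  -- E2 : differentiating Q = H gives (x²+y²) + H((y²-x²)cos - 2xy sin) = 0
  have hE2 : ∀ s ∈ Set.Ioo a b,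
      (x s ^ 2 + y s ^ 2) + H * ((y s ^ 2 - x s ^ 2) * Real.cos (φ s)
        - 2 * x s * y s * Real.sin (φ s)) = 0 := by
    intro s hs
    have hys : y s ≠ 0 := (hy0 s hs).ne'
    have hys4 : (4 : ℝ) * y s ≠ 0 := by simp [hys]
    have hcos : HasDerivAt (fun t => Real.cos (φ t))
        (-Real.sin (φ s) * (2 * (H - Real.cos (φ s)))) s :=
      (Real.hasDerivAt_cos (φ s)).comp s (hφ s hs)
    have hsin : HasDerivAt (fun t => Real.sin (φ t))
        (Real.cos (φ s) * (2 * (H - Real.cos (φ s)))) s :=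
      (Real.hasDerivAt_sin (φ s)).comp s (hφ s hs)
    have hnum : HasDerivAt (fun t => y t ^ 2 - x t ^ 2)
        (2 * y s * (2 * y s * Real.sin (φ s)) - 2 * x s * (2 * y s * Real.cos (φ s))) s := by
      have h := (((hy s hs).fun_pow 2).fun_sub ((hx s hs).fun_pow 2))
      refine h.congr_deriv ?_
      push_cast
      ring
    have hden : HasDerivAt (fun t => 4 * y t) (4 * (2 * y s * Real.sin (φ s))) s :=
      (hy s hs).const_mul 4
    have hdiv := hnum.fun_div hden hys4
    have hQ' := (hdiv.mul hsin).add (((hx s hs).div_const 2).mul hcos)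
    have hQ0 : HasDerivAt (fun t => (y t ^ 2 - x t ^ 2) / (4 * y t) * Real.sin (φ t)
        + x t / 2 * Real.cos (φ t)) 0 s := by
      have hev : (fun t => (y t ^ 2 - x t ^ 2) / (4 * y t) * Real.sin (φ t)
          + x t / 2 * Real.cos (φ t)) =ᶠ[nhds s] fun _ => H :=
        Filter.eventuallyEq_of_mem (isOpen_Ioo.mem_nhds hs) (fun t ht => hQH t ht)
      exact (hasDerivAt_const s H).congr_of_eventuallyEq hev
    have h0 := hQ0.unique hQ'
    have pyth := Real.sin_sq_add_cos_sq (φ s)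
    field_simp at h0
    have h64 : 64 * y s ^ 2 * ((x s ^ 2 + y s ^ 2) + H * ((y s ^ 2 - x s ^ 2) * Real.cos (φ s)
        - 2 * x s * y s * Real.sin (φ s))) = 0 := by
      linear_combination -32 * y s ^ 2 * h0 - 64 * y s ^ 2 * (x s ^ 2 + y s ^ 2) * pyth
    have h64' : (64 : ℝ) * y s ^ 2 ≠ 0 := by positivity
    exact (mul_eq_zero.mp h64).resolve_left h64'
  -- key pointwise algebraic identity : (H²-1)(x²+y²)² = 16 H⁴ y²
  have hkey : ∀ s ∈ Set.Ioo a b,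
      (H ^ 2 - 1) * (x s ^ 2 + y s ^ 2) ^ 2 = 16 * H ^ 4 * y s ^ 2 := by
    intro s hs
    have pyth := Real.sin_sq_add_cos_sq (φ s)
    have e1 := hE1 s hs
    have e2 := hE2 s hs
    linear_combination
      (H * ((y s ^ 2 - x s ^ 2) * Real.cos (φ s) - 2 * x s * y s * Real.sin (φ s))
        - (x s ^ 2 + y s ^ 2)) * e2
      + H ^ 2 * ((y s ^ 2 - x s ^ 2) * Real.sin (φ s) + 2 * x s * y s * Real.cos (φ s)
        + 4 * H * y s) * e1
      - H ^ 2 * (x s ^ 2 + y s ^ 2) ^ 2 * pyth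
  -- the two sample points
  set s₁ : ℝ := (2 * a + b) / 3 with hs₁def
  set s₂ : ℝ := (a + 2 * b) / 3 with hs₂def
  have hs₁ : s₁ ∈ Set.Ioo a b := ⟨by rw [hs₁def]; linarith, by rw [hs₁def]; linarith⟩
  have hs₂ : s₂ ∈ Set.Ioo a b := ⟨by rw [hs₂def]; linarith, by rw [hs₂def]; linarith⟩
  have hs₁₂ : s₁ < s₂ := by rw [hs₁def, hs₂def]; linarith
  -- H² ≠ 1
  have hH1 : H ^ 2 ≠ 1 := by
    intro h1
    have hk := hkey s₁ hs₁
    have hyp := hy0 s₁ hs₁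
    have h4 : H ^ 4 = 1 := by linear_combination (H ^ 2 + 1) * h1
    have hzero : (16 : ℝ) * y s₁ ^ 2 = 0 := by
      linear_combination -hk + (x s₁ ^ 2 + y s₁ ^ 2) ^ 2 * h1 - 16 * y s₁ ^ 2 * h4
    nlinarith [hyp]
  -- the radius function K
  set K : ℝ → ℝ := fun s => (x s ^ 2 + y s ^ 2) / (4 * y s) with hKdef
  have hKpos : ∀ s ∈ Set.Ioo a b, 0 < K s := by
    intro s hs
    have hyp := hy0 s hs
    have : 0 < x s ^ 2 + y s ^ 2 := by positivity
    exact div_pos this (by positivity)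
  have hK2 : ∀ s ∈ Set.Ioo a b, (K s) ^ 2 * (H ^ 2 - 1) = H ^ 4 := by
    intro s hs
    have hys : y s ≠ 0 := (hy0 s hs).ne'
    have hk := hkey s hs
    rw [hKdef]
    field_simp
    linear_combination hk
  -- K takes the same value at s₁ and s₂
  have hKeq : K s₁ = K s₂ := by
    have h1 := hK2 s₁ hs₁
    have h2 := hK2 s₂ hs₂
    have hsq : K s₁ ^ 2 = K s₂ ^ 2 := by
      have hne : H ^ 2 - 1 ≠ 0 := sub_ne_zero.mpr hH1
      have := h1.trans h2.symm
      exact mul_right_cancel₀ hne this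
    have hmul : (K s₁ - K s₂) * (K s₁ + K s₂) = 0 := by linear_combination hsq
    rcases mul_eq_zero.mp hmul with h | h
    · linarith [sub_eq_zero.mp h]
    · exfalso; nlinarith [hKpos s₁ hs₁, hKpos s₂ hs₂]
  -- K has derivative 2H everywhere
  have hK' : ∀ s ∈ Set.Ioo a b, HasDerivAt K (2 * H) s := by
    intro s hs
    have hys : y s ≠ 0 := (hy0 s hs).ne'
    have hys4 : (4 : ℝ) * y s ≠ 0 := by simp [hys]
    have hnum : HasDerivAt (fun t => x t ^ 2 + y t ^ 2)
        (2 * x s * (2 * y s * Real.cos (φ s)) + 2 * y s * (2 * y s * Real.sin (φ s))) s := by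
      have h := (((hx s hs).fun_pow 2).fun_add ((hy s hs).fun_pow 2))
      refine h.congr_deriv ?_
      push_cast
      ring
    have hden : HasDerivAt (fun t => 4 * y t) (4 * (2 * y s * Real.sin (φ s))) s :=
      (hy s hs).const_mul 4
    have hdiv := hnum.fun_div hden hys4
    have : ((2 * x s * (2 * y s * Real.cos (φ s)) + 2 * y s * (2 * y s * Real.sin (φ s)))
          * (4 * y s) - (x s ^ 2 + y s ^ 2) * (4 * (2 * y s * Real.sin (φ s))))
        / (4 * y s) ^ 2 = 2 * H := by
      have e1 := hE1 s hs
      field_simp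
      linear_combination e1
    rw [hKdef]
    exact this ▸ hdiv
  -- MVT on [s₁, s₂] forces H = 0
  have hcont : ContinuousOn K (Set.Icc s₁ s₂) := by
    intro t ht
    have htI : t ∈ Set.Ioo a b :=
      ⟨lt_of_lt_of_le hs₁.1 ht.1, lt_of_le_of_lt ht.2 hs₂.2⟩
    exact ((hK' t htI).continuousAt).continuousWithinAt
  have hderiv : ∀ t ∈ Set.Ioo s₁ s₂, HasDerivAt K ((fun _ => 2 * H) t) t := by
    intro t ht
    have htI : t ∈ Set.Ioo a b := ⟨lt_trans hs₁.1 ht.1, lt_trans ht.2 hs₂.2⟩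
    exact hK' t htI
  obtain ⟨c, _, hc⟩ := exists_hasDerivAt_eq_slope K (fun _ => 2 * H) hs₁₂ hcont hderiv
  have hH0 : H = 0 := by
    rw [hKeq, sub_self, zero_div] at hc
    linarith
  -- final contradiction from E2 with H = 0
  have := hE2 s₁ hs₁
  rw [hH0] at this
  have hyp := hy0 s₁ hs₁
  nlinarith [this, hyp, sq_nonneg (x s₁)]
end
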